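/- Let (G,E,φ_c) be a twisted Exel–Pardo tuple. Then the Cohn algebra C(G,E,φ_c) is a free ℓ-module with basis ℬ = {αgβ* : α,β ∈ 𝒫(E), g ∈ G, g(r(β)) = r(α)}. -/

import Mathlib

noncomputable section
open scoped Classical

/-- A directed graph: vertices, edges, source and range maps. -/
structure DirGraph : Type 1 where
  V : Type
  E : Type
  s : E → V
  r : E → V

namespace DirGraph

variable {Γ : DirGraph}

/-- A (raw) finite path: a source vertex together with a list of edges.
Paths of length `0` are vertices. -/
structure Path (Γ : DirGraph) : Type where
  src : Γ.V
  edges : List Γ.E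

/-- The range of a path. -/
def Path.rng (p : Path Γ) : Γ.V := p.edges.foldl (fun _ e => Γ.r e) p.src

/-- The length of a path. -/
def Path.length (p : Path Γ) : ℕ := p.edges.length

/-- A raw path is an actual path if consecutive edges are composable and the
first edge starts at the source vertex. -/
def Path.IsGood (p : Path Γ) : Prop :=
  (∀ e ∈ p.edges.head?, Γ.s e = p.src) ∧
    p.edges.Chain' fun e f => Γ.r e = Γ.s f

/-- The length-zero path at a vertex. -/
def ofVertex (Γ : DirGraph) (v : Γ.V) : Path Γ := ⟨v, []⟩

/-- The length-one path given by an edge. -/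
def ofEdge (Γ : DirGraph) (e : Γ.E) : Path Γ := ⟨Γ.s e, [e]⟩

/-- Concatenation of paths. -/
def Path.comp (p q : Path Γ) : Path Γ := ⟨p.src, p.edges ++ q.edges⟩

theorem ofVertex_isGood (Γ : DirGraph) (v : Γ.V) : (ofVertex Γ v).IsGood := by
  constructor <;> simp [ofVertex, Path.IsGood, List.Chain']

theorem ofEdge_isGood (Γ : DirGraph) (e : Γ.E) : (ofEdge Γ e).IsGood := by
  constructor <;> simp [ofEdge, Path.IsGood, List.Chain']

@[simp] theorem rng_ofVertex (Γ : DirGraph) (v : Γ.V) : (ofVertex Γ v).rng = v := rfl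

@[simp] theorem rng_ofEdge (Γ : DirGraph) (e : Γ.E) : (ofEdge Γ e).rng = Γ.r e := rfl

theorem rng_cons (v : Γ.V) (e : Γ.E) (l : List Γ.E) :
    Path.rng ⟨v, e :: l⟩ = Path.rng ⟨Γ.r e, l⟩ := rfl

theorem rng_eq_getLast {v : Γ.V} :
    ∀ {l : List Γ.E} {x : Γ.E}, x ∈ l.getLast? → Path.rng ⟨v, l⟩ = Γ.r x := by
  intro l
  induction l generalizing v with
  | nil => intro x hx; simp at hx
  | cons e l ih =>
    intro x hx
    cases l with
    | nil => simp_all [Path.rng]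
    | cons f l =>
      rw [List.getLast?_cons_cons] at hx
      rw [rng_cons]
      exact ih hx

theorem isGood_comp {p q : Path Γ} (hp : p.IsGood) (hq : q.IsGood)
    (h : p.rng = q.src) : (p.comp q).IsGood := by
  constructor
  · intro e he
    rcases p with ⟨v, l⟩
    cases l with
    | nil =>
      simp only [Path.comp, List.nil_append] at he ⊢
      have := hq.1 e he
      rw [this, ← h]; rfl
    | cons a l =>
      simp only [Path.comp, List.cons_append, List.head?_cons, Option.mem_def,
        Option.some.injEq] at he
      subst he
      exact hp.1 a (by simp)
  · refine List.IsChain.append hp.2 hq.2 ?_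
    intro x hx y hy
    have h1 : p.rng = Γ.r x := rng_eq_getLast hx
    have h2 : Γ.s y = q.src := hq.1 y hy
    rw [← h1, h, ← h2]

/-- The set of regular vertices: those emitting a finite nonzero number of edges. -/
def regSet (Γ : DirGraph) : Set Γ.V := {v | (Γ.s ⁻¹' {v}).Finite ∧ (Γ.s ⁻¹' {v}).Nonempty}

/-- The set of sinks. -/
def sinkSet (Γ : DirGraph) : Set Γ.V := {v | Γ.s ⁻¹' {v} = ∅}

end DirGraph
/-- A twisted Exel–Pardo tuple `(G, E, φ_c)`: a group `G` acting on the graph `Γ`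
by graph automorphisms, an Exel–Pardo `1`-cocycle `φ : G × E¹ → G` satisfying
`φ(g,e)(v) = g(v)`, and a `1`-cocycle `c : G × E¹ → 𝒰(ℓ)`. -/
structure TwistedEP (ℓ : Type) [CommRing ℓ] (Γ : DirGraph) (G : Type) [Group G] : Type where
  actV : G → Γ.V → Γ.V
  actE : G → Γ.E → Γ.E
  actV_one : ∀ v, actV 1 v = v
  actV_mul : ∀ g h v, actV (g * h) v = actV g (actV h v)
  actE_one : ∀ e, actE 1 e = e
  actE_mul : ∀ g h e, actE (g * h) e = actE g (actE h e)
  s_act : ∀ g e, Γ.s (actE g e) = actV g (Γ.s e)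
  r_act : ∀ g e, Γ.r (actE g e) = actV g (Γ.r e)
  φ : G → Γ.E → G
  φ_mul : ∀ g h e, φ (g * h) e = φ g (actE h e) * φ h e
  φ_actV : ∀ g e v, actV (φ g e) v = actV g v
  c : G → Γ.E → ℓˣ
  c_mul : ∀ g h e, c (g * h) e = c g (actE h e) * c h e

namespace TwistedEP

open DirGraph

variable {ℓ : Type} [CommRing ℓ] {Γ : DirGraph} {G : Type} [Group G] (T : TwistedEP ℓ Γ G)

theorem φ_one (e : Γ.E) : T.φ 1 e = 1 := by
  have h := T.φ_mul 1 1 e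
  rw [one_mul, T.actE_one] at h
  exact (left_eq_mul.mp h)

theorem c_one (e : Γ.E) : T.c 1 e = 1 := by
  have h := T.c_mul 1 1 e
  rw [one_mul, T.actE_one] at h
  exact (left_eq_mul.mp h)

theorem actV_inv_act (g : G) (v : Γ.V) : T.actV g⁻¹ (T.actV g v) = v := by
  rw [← T.actV_mul, inv_mul_cancel, T.actV_one]

theorem actV_act_inv (g : G) (v : Γ.V) : T.actV g (T.actV g⁻¹ v) = v := by
  rw [← T.actV_mul, mul_inv_cancel, T.actV_one]

theorem actE_act_inv (g : G) (e : Γ.E) : T.actE g (T.actE g⁻¹ e) = e := by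
  rw [← T.actE_mul, mul_inv_cancel, T.actE_one]

/-- The extension of the `G`-action to lists of edges. -/
def actL : G → List Γ.E → List Γ.E
  | _, [] => []
  | g, e :: l => T.actE g e :: actL (T.φ g e) l

/-- The extension of the cocycle `φ` to lists of edges. -/
def φL : G → List Γ.E → G
  | g, [] => g
  | g, e :: l => φL (T.φ g e) l

/-- The extension of the twist `c` to lists of edges. -/
def cL : G → List Γ.E → ℓˣ
  | _, [] => 1
  | g, e :: l => T.c g e * cL (T.φ g e) l

/-- The extension of the `G`-action to finite paths. -/
def actP (g : G) (p : Path Γ) : Path Γ := ⟨T.actV g p.src, T.actL g p.edges⟩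

/-- The extension of the cocycle `φ` to finite paths. -/
def φP (g : G) (p : Path Γ) : G := T.φL g p.edges

/-- The extension of the twist `c` to finite paths. -/
def cP (g : G) (p : Path Γ) : ℓˣ := T.cL g p.edges

@[simp] theorem actL_nil (g : G) : T.actL g ([] : List Γ.E) = [] := rfl

@[simp] theorem actL_cons (g : G) (e : Γ.E) (l : List Γ.E) :
    T.actL g (e :: l) = T.actE g e :: T.actL (T.φ g e) l := rfl

theorem φ_actV_edges : ∀ (l : List Γ.E) (g : G) (v : Γ.V),
    T.actV (T.φL g l) v = T.actV g v := by
  intro l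
  induction l with
  | nil => intro g v; rfl
  | cons e l ih =>
    intro g v
    show T.actV (T.φL (T.φ g e) l) v = _
    rw [ih (T.φ g e) v, T.φ_actV]

theorem rng_actP : ∀ (p : Path Γ) (g : G), (T.actP g p).rng = T.actV g p.rng := by
  intro ⟨v, l⟩
  induction l generalizing v with
  | nil => intro g; rfl
  | cons e l ih =>
    intro g
    show Path.rng ⟨T.actV g v, T.actE g e :: T.actL (T.φ g e) l⟩ = _
    rw [DirGraph.rng_cons, DirGraph.rng_cons]
    have h1 : Path.rng ⟨Γ.r (T.actE g e), T.actL (T.φ g e) l⟩ =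
        Path.rng ⟨T.actV (T.φ g e) (Γ.r e), T.actL (T.φ g e) l⟩ := by
      rw [T.r_act, T.φ_actV]
    rw [h1]
    have h2 := ih (Γ.r e) (T.φ g e)
    show (T.actP (T.φ g e) ⟨Γ.r e, l⟩).rng = _
    rw [h2, T.φ_actV]

theorem src_actP (p : Path Γ) (g : G) : (T.actP g p).src = T.actV g p.src := rfl

theorem chain_actL : ∀ (l : List Γ.E) (g : G),
    l.Chain' (fun e f => Γ.r e = Γ.s f) →
      (T.actL g l).Chain' (fun e f => Γ.r e = Γ.s f) := by
  intro l
  induction l with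
  | nil => intro g _; exact List.isChain_nil
  | cons e l ih =>
    intro g h
    rw [T.actL_cons]
    cases l with
    | nil => simp [List.Chain']
    | cons f l =>
      simp only [List.Chain', List.isChain_cons_cons] at h
      have ihh := ih (T.φ g e) h.2
      rw [T.actL_cons] at ihh ⊢
      simp only [List.Chain', List.isChain_cons_cons]
      refine ⟨?_, ihh⟩
      rw [T.r_act, T.s_act, T.φ_actV, h.1]

theorem isGood_actP {p : Path Γ} (g : G) (hp : p.IsGood) : (T.actP g p).IsGood := by
  rcases p with ⟨v, l⟩
  constructor
  · intro e he
    cases l with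
    | nil => simp [actP] at he
    | cons a l =>
      rw [show (T.actP g ⟨v, a :: l⟩).edges = T.actE g a :: T.actL (T.φ g a) l from rfl] at he
      simp only [List.head?_cons, Option.mem_def, Option.some.injEq] at he
      subst he
      rw [T.s_act, hp.1 a (by simp)]
      rfl
  · exact T.chain_actL l g hp.2

end TwistedEP
/-- The generators `v`, `vg`, `e`, `eg`, `e*`, `ge*` of the Cohn algebra. -/
inductive CohnGen (Γ : DirGraph) (G : Type) : Type
  | v (v : Γ.V)
  | vg (v : Γ.V) (g : G)
  | e (e : Γ.E)
  | eg (e : Γ.E) (g : G)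
  | st (e : Γ.E)
  | gst (g : G) (e : Γ.E)

namespace TwistedEP

open DirGraph

variable {ℓ : Type} [CommRing ℓ] {Γ : DirGraph} {G : Type} [Group G] (T : TwistedEP ℓ Γ G)

/-- Abbreviation for the free algebra on the Cohn generators. -/
abbrev FreeCohn (ℓ : Type) [CommRing ℓ] (Γ : DirGraph) (G : Type) : Type :=
  FreeAlgebra ℓ (CohnGen Γ G)

/-- `ι x` is the image of the generator `x` in the free algebra. -/
abbrev ι (x : CohnGen Γ G) : FreeCohn ℓ Γ G := FreeAlgebra.ι ℓ x

/-- The defining relations of the Cohn algebra `C(G,E,φ_c)` of a twisted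
Exel–Pardo tuple. -/
inductive CohnRel : FreeCohn ℓ Γ G → FreeCohn ℓ Γ G → Prop
  | v_eq (v : Γ.V) : CohnRel (ι (.v v)) (ι (.vg v 1))
  | e_eq (e : Γ.E) : CohnRel (ι (.e e)) (ι (.eg e 1))
  | st_eq (e : Γ.E) : CohnRel (ι (.st e)) (ι (.gst 1 e))
  | eg_eq (e : Γ.E) (g : G) :
      CohnRel (ι (.eg e g)) (ι (.v (Γ.s e)) * ι (.e e) * ι (.vg (Γ.r e) g))
  | gst_eq (g : G) (e : Γ.E) :
      CohnRel (ι (.gst g e))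
        (ι (.vg (T.actV g (Γ.r e)) g) * ι (.st e) * ι (.v (Γ.s e)))
  | st_e (e f : Γ.E) :
      CohnRel (ι (.st e) * ι (.e f)) (if e = f then ι (.v (Γ.r e)) else 0)
  | vg_vg (v : Γ.V) (g : G) (w : Γ.V) (h : G) :
      CohnRel (ι (.vg v g) * ι (.vg w h))
        (if v = T.actV g w then ι (.vg v (g * h)) else 0)
  | vg_e (v : Γ.V) (g : G) (e : Γ.E) :
      CohnRel (ι (.vg v g) * ι (.e e))
        (if v = T.actV g (Γ.s e) then
          (T.c g e : ℓ) • ι (.eg (T.actE g e) (T.φ g e)) else 0)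
  | st_vg (e : Γ.E) (v : Γ.V) (g : G) :
      CohnRel (ι (.st e) * ι (.vg v g))
        (if v = Γ.s e then
          (T.c g (T.actE g⁻¹ e) : ℓ) •
            ι (.gst (T.φ g (T.actE g⁻¹ e)) (T.actE g⁻¹ e)) else 0)

/-- The Cohn algebra `C(G,E,φ_c)` of a twisted Exel–Pardo tuple, presented by
generators and relations.  (For infinite `E⁰` this `RingQuot` is the
unitalization of the Cohn algebra; the Cohn algebra itself is the non-unital
subalgebra generated by the generators, see `TwistedEP.cohnPart`.) -/
abbrev CQ : Type := RingQuot (CohnRel T)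

/-- The quotient map from the free algebra to the Cohn algebra. -/
abbrev mkC : FreeCohn ℓ Γ G →ₐ[ℓ] CQ T := RingQuot.mkAlgHom ℓ (CohnRel T)

/-- The element `vg` of the Cohn algebra. -/
def xvg (v : Γ.V) (g : G) : CQ T := T.mkC (ι (.vg v g))

/-- The element `v` of the Cohn algebra. -/
def xv (v : Γ.V) : CQ T := T.mkC (ι (.v v))

/-- The element `e` of the Cohn algebra. -/
def xe (e : Γ.E) : CQ T := T.mkC (ι (.e e))

/-- The element `eg` of the Cohn algebra. -/
def xeg (e : Γ.E) (g : G) : CQ T := T.mkC (ι (.eg e g))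

/-- The element `e*` of the Cohn algebra. -/
def xst (e : Γ.E) : CQ T := T.mkC (ι (.st e))

/-- The element `ge*` of the Cohn algebra. -/
def xgst (g : G) (e : Γ.E) : CQ T := T.mkC (ι (.gst g e))

/-- The image `α ∈ C(G,E,φ_c)` of a path `α`, i.e. the product of (the source
vertex and) its edges. -/
def pathElem (p : Path Γ) : CQ T :=
  p.edges.foldl (fun a e => a * T.xe e) (T.xv p.src)

/-- The image `β* ∈ C(G,E,φ_c)` of the formal adjoint of a path `β`, i.e. the
product of the starred edges of `β` in reverse order. -/
def starElem (p : Path Γ) : CQ T :=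
  p.edges.foldr (fun e a => a * T.xst e) (T.xv p.rng)

/-- The element `α g β*` of the Cohn algebra. -/
def mixElem (α : Path Γ) (g : G) (β : Path Γ) : CQ T :=
  T.pathElem α * T.xvg α.rng g * T.starElem β

/-- The element `q_v g = vg - ∑_{s(e)=v} e ⬝ φ_c(g, g⁻¹(e)) ⬝ (g⁻¹(e))*` of the
Cohn algebra.  (The `finsum` is zero unless `v` emits finitely many edges;
`q_v g` is used for regular `v` only.) -/
def qElem (v : Γ.V) (g : G) : CQ T :=
  T.xvg v g - ∑ᶠ e ∈ Γ.s ⁻¹' {v},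
    (T.c g (T.actE g⁻¹ e) : ℓ) •
      (T.xe e * T.xgst (T.φ g (T.actE g⁻¹ e)) (T.actE g⁻¹ e))

/-- The two-sided ideal `𝒦(G,E,φ_c) ⊴ C(G,E,φ_c)` generated by the elements
`q_v`, `v` regular, regarded as an `ℓ`-submodule. -/
def KIdeal : Submodule ℓ (CQ T) :=
  Submodule.span ℓ
    {x | ∃ v ∈ regSet Γ, ∃ a b : CQ T, x = a * T.qElem v 1 * b}

/-- The set of generators of the Cohn algebra. -/
def genSet : Set (CQ T) := Set.range fun x : CohnGen Γ G => T.mkC (ι x)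

/-- The Cohn algebra `C(G,E,φ_c)` itself (it is in general non-unital): the
non-unital subalgebra of `CQ` generated by the generators, regarded as an
`ℓ`-submodule. -/
def cohnPart : Submodule ℓ (CQ T) :=
  (NonUnitalAlgebra.adjoin ℓ (T.genSet)).toSubmodule

end TwistedEP

namespace TwistedEP

open DirGraph

variable {ℓ : Type} [CommRing ℓ] {Γ : DirGraph} {G : Type} [Group G] (T : TwistedEP ℓ Γ G)

/-- The index set of the family `ℬ = {α g β* : α, β ∈ 𝒫(E), g ∈ G, g(r(β)) = r(α)}`. -/
def BIdx : Type :=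
  {x : Path Γ × G × Path Γ //
    x.1.IsGood ∧ x.2.2.IsGood ∧ T.actV x.2.1 x.2.2.rng = x.1.rng}

/-- The family `ℬ`, `(α, g, β) ↦ α g β*`. -/
def BFam (i : T.BIdx) : CQ T := T.mixElem i.1.1 i.1.2.1 i.1.2.2

end TwistedEP

namespace TwistedEP

open DirGraph

variable {ℓ : Type} [CommRing ℓ] {Γ : DirGraph} {G : Type} [Group G] (T : TwistedEP ℓ Γ G)

@[simp] theorem φL_nil (g : G) : T.φL g ([] : List Γ.E) = g := rfl
@[simp] theorem φL_cons (g : G) (e : Γ.E) (l : List Γ.E) :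
    T.φL g (e :: l) = T.φL (T.φ g e) l := rfl
@[simp] theorem cL_nil (g : G) : T.cL g ([] : List Γ.E) = 1 := rfl
@[simp] theorem cL_cons (g : G) (e : Γ.E) (l : List Γ.E) :
    T.cL g (e :: l) = T.c g e * T.cL (T.φ g e) l := rfl

theorem actL_one : ∀ l : List Γ.E, T.actL 1 l = l := by
  intro l
  induction l with
  | nil => rfl
  | cons e l ih => rw [actL_cons, T.actE_one, T.φ_one, ih]

theorem φL_one : ∀ l : List Γ.E, T.φL 1 l = 1 := by
  intro l
  induction l with
  | nil => rfl
  | cons e l ih => rw [φL_cons, T.φ_one, ih]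

theorem cL_one : ∀ l : List Γ.E, T.cL 1 l = 1 := by
  intro l
  induction l with
  | nil => rfl
  | cons e l ih => rw [cL_cons, T.c_one, T.φ_one, ih, mul_one]

theorem actL_mul : ∀ (l : List Γ.E) (g h : G),
    T.actL (g * h) l = T.actL g (T.actL h l) := by
  intro l
  induction l with
  | nil => intro g h; rfl
  | cons e l ih =>
    intro g h
    rw [actL_cons, actL_cons, actL_cons, T.actE_mul, T.φ_mul, ih]

theorem φL_mul : ∀ (l : List Γ.E) (g h : G),
    T.φL (g * h) l = T.φL g (T.actL h l) * T.φL h l := by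
  intro l
  induction l with
  | nil => intro g h; rfl
  | cons e l ih =>
    intro g h
    simp only [φL_cons, actL_cons]
    rw [T.φ_mul, ih]

theorem cL_mul : ∀ (l : List Γ.E) (g h : G),
    T.cL (g * h) l = T.cL g (T.actL h l) * T.cL h l := by
  intro l
  induction l with
  | nil => intro g h; simp
  | cons e l ih =>
    intro g h
    simp only [cL_cons, actL_cons]
    rw [T.c_mul, T.φ_mul, ih]
    exact mul_mul_mul_comm _ _ _ _

theorem actE_inv_act (g : G) (e : Γ.E) : T.actE g⁻¹ (T.actE g e) = e := by
  rw [← T.actE_mul, inv_mul_cancel, T.actE_one]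

theorem actE_injective (g : G) : Function.Injective (T.actE g) := by
  intro a b hab
  have := congrArg (T.actE g⁻¹) hab
  rwa [T.actE_inv_act, T.actE_inv_act] at this

theorem actV_injective (g : G) : Function.Injective (T.actV g) := by
  intro a b hab
  have := congrArg (T.actV g⁻¹) hab
  rwa [T.actV_inv_act, T.actV_inv_act] at this

@[simp] theorem actP_src (g : G) (p : Path Γ) : (T.actP g p).src = T.actV g p.src := rfl
@[simp] theorem actP_edges (g : G) (p : Path Γ) : (T.actP g p).edges = T.actL g p.edges := rfl

theorem actP_one (p : Path Γ) : T.actP 1 p = p := by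
  cases p; simp [actP, T.actV_one, T.actL_one]

theorem φP_one (p : Path Γ) : T.φP 1 p = 1 := T.φL_one p.edges

theorem cP_one (p : Path Γ) : T.cP 1 p = 1 := T.cL_one p.edges

/-! ### A representation of the Cohn algebra on a free module -/

/-- The free `ℓ`-module on all triples `(α, g, β)`. -/
abbrev MM (ℓ : Type) [CommRing ℓ] (Γ : DirGraph) (G : Type) [Group G] : Type :=
  (Path Γ × G × Path Γ) →₀ ℓ

/-- Action of a vertex `v` on normal forms. -/
def avF (_T : TwistedEP ℓ Γ G) (w : Γ.V) : (Path Γ × G × Path Γ) → MM ℓ Γ G := fun t =>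
  if w = t.1.src then Finsupp.single t 1 else 0

/-- Action of `vg` on normal forms. -/
def avgF (w : Γ.V) (h : G) : (Path Γ × G × Path Γ) → MM ℓ Γ G := fun t =>
  if w = T.actV h t.1.src then
    Finsupp.single (T.actP h t.1, T.φP h t.1 * t.2.1, t.2.2) ((T.cP h t.1 : ℓ)) else 0

/-- Action of an edge `e` on normal forms. -/
def aeF (_T : TwistedEP ℓ Γ G) (e : Γ.E) : (Path Γ × G × Path Γ) → MM ℓ Γ G := fun t =>
  if Γ.r e = t.1.src then
    Finsupp.single (⟨Γ.s e, e :: t.1.edges⟩, t.2.1, t.2.2) (1 : ℓ) else 0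

/-- Action of a ghost edge `e*` on normal forms. -/
def astF (e : Γ.E) : (Path Γ × G × Path Γ) → MM ℓ Γ G := fun t =>
  match t with
  | (⟨v, []⟩, g, β) =>
    if v = Γ.s e then
      Finsupp.single (ofVertex Γ (Γ.r e), T.φ g (T.actE g⁻¹ e),
        β.comp (ofEdge Γ (T.actE g⁻¹ e))) ((T.c g (T.actE g⁻¹ e) : ℓ)) else 0
  | (⟨v, e' :: l⟩, g, β) =>
    if e' = e ∧ v = Γ.s e then Finsupp.single (⟨Γ.r e, l⟩, g, β) (1 : ℓ) else 0

/-- The endomorphism given by a vertex. -/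
def Fv (_T : TwistedEP ℓ Γ G) (w : Γ.V) : Module.End ℓ (MM ℓ Γ G) := Finsupp.linearCombination ℓ (_T.avF w)

/-- The endomorphism given by `vg`. -/
def Fvg (w : Γ.V) (h : G) : Module.End ℓ (MM ℓ Γ G) :=
  Finsupp.linearCombination ℓ (T.avgF w h)

/-- The endomorphism given by an edge. -/
def Fe (_T : TwistedEP ℓ Γ G) (e : Γ.E) : Module.End ℓ (MM ℓ Γ G) := Finsupp.linearCombination ℓ (_T.aeF e)

/-- The endomorphism given by a ghost edge. -/
def Fst (e : Γ.E) : Module.End ℓ (MM ℓ Γ G) := Finsupp.linearCombination ℓ (T.astF e)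

@[simp] theorem Fv_single (w : Γ.V) (t) (r : ℓ) :
    T.Fv w (Finsupp.single t r) = r • T.avF w t := Finsupp.linearCombination_single ..

@[simp] theorem Fvg_single (w : Γ.V) (h : G) (t) (r : ℓ) :
    T.Fvg w h (Finsupp.single t r) = r • T.avgF w h t := Finsupp.linearCombination_single ..

@[simp] theorem Fe_single (e : Γ.E) (t) (r : ℓ) :
    T.Fe e (Finsupp.single t r) = r • T.aeF e t := Finsupp.linearCombination_single ..

@[simp] theorem Fst_single (e : Γ.E) (t) (r : ℓ) :
    T.Fst e (Finsupp.single t r) = r • T.astF e t := Finsupp.linearCombination_single ..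

/-- The action of the generators of the Cohn algebra. -/
def gAct : CohnGen Γ G → Module.End ℓ (MM ℓ Γ G)
  | .v w => T.Fv w
  | .vg w h => T.Fvg w h
  | .e e => T.Fe e
  | .eg e h => T.Fe e * T.Fvg (Γ.r e) h
  | .st e => T.Fst e
  | .gst h e => T.Fvg (T.actV h (Γ.r e)) h * (T.Fst e * T.Fv (Γ.s e))

/-- The induced map on the free algebra. -/
def rho0 : FreeCohn ℓ Γ G →ₐ[ℓ] Module.End ℓ (MM ℓ Γ G) :=
  FreeAlgebra.lift ℓ T.gAct

@[simp] theorem rho0_ι (x : CohnGen Γ G) : T.rho0 (ι x) = T.gAct x :=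
  FreeAlgebra.lift_ι_apply ..

end TwistedEP
namespace TwistedEP

open DirGraph

variable {ℓ : Type} [CommRing ℓ] {Γ : DirGraph} {G : Type} [Group G] (T : TwistedEP ℓ Γ G)

@[simp] theorem src_mk (v : Γ.V) (l : List Γ.E) : (DirGraph.Path.mk v l).src = v := rfl
@[simp] theorem edges_mk (v : Γ.V) (l : List Γ.E) : (DirGraph.Path.mk v l).edges = l := rfl
@[simp] theorem ofVertex_src (v : Γ.V) : (ofVertex Γ v).src = v := rfl
@[simp] theorem ofVertex_edges (v : Γ.V) : (ofVertex Γ v).edges = [] := rfl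
@[simp] theorem ofEdge_src (e : Γ.E) : (ofEdge Γ e).src = Γ.s e := rfl
@[simp] theorem ofEdge_edges (e : Γ.E) : (ofEdge Γ e).edges = [e] := rfl
@[simp] theorem comp_src (p q : Path Γ) : (p.comp q).src = p.src := rfl
@[simp] theorem comp_edges (p q : Path Γ) : (p.comp q).edges = p.edges ++ q.edges := rfl

theorem actP_mul (g h : G) (p : Path Γ) : T.actP (g * h) p = T.actP g (T.actP h p) := by
  cases p; simp [actP, T.actV_mul, T.actL_mul]

theorem φP_mul (g h : G) (p : Path Γ) :
    T.φP (g * h) p = T.φP g (T.actP h p) * T.φP h p := T.φL_mul p.edges g h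

theorem cP_mul (g h : G) (p : Path Γ) :
    T.cP (g * h) p = T.cP g (T.actP h p) * T.cP h p := T.cL_mul p.edges g h

@[simp] theorem actV_cancel (g : G) {a b : Γ.V} : T.actV g a = T.actV g b ↔ a = b :=
  (T.actV_injective g).eq_iff

@[simp] theorem actE_cancel (g : G) {a b : Γ.E} : T.actE g a = T.actE g b ↔ a = b :=
  (T.actE_injective g).eq_iff

@[simp] theorem actP_ofVertex (g : G) (v : Γ.V) :
    T.actP g (ofVertex Γ v) = ofVertex Γ (T.actV g v) := rfl
@[simp] theorem φP_ofVertex (g : G) (v : Γ.V) : T.φP g (ofVertex Γ v) = g := rfl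
@[simp] theorem cP_ofVertex (g : G) (v : Γ.V) : T.cP g (ofVertex Γ v) = 1 := rfl

theorem actP_mk (g : G) (v : Γ.V) (l : List Γ.E) :
    T.actP g (DirGraph.Path.mk v l) = DirGraph.Path.mk (T.actV g v) (T.actL g l) := rfl
theorem φP_mk (g : G) (v : Γ.V) (l : List Γ.E) :
    T.φP g (DirGraph.Path.mk v l) = T.φL g l := rfl
theorem cP_mk (g : G) (v : Γ.V) (l : List Γ.E) :
    T.cP g (DirGraph.Path.mk v l) = T.cL g l := rfl

theorem Fv_single' (w : Γ.V) (α : Path Γ) (g : G) (β : Path Γ) (r : ℓ) :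
    T.Fv w (Finsupp.single (α, g, β) r) =
      if w = α.src then Finsupp.single (α, g, β) r else 0 := by
  simp [avF, smul_ite, Finsupp.smul_single]

theorem Fvg_single' (w : Γ.V) (h : G) (α : Path Γ) (g : G) (β : Path Γ) (r : ℓ) :
    T.Fvg w h (Finsupp.single (α, g, β) r) =
      if w = T.actV h α.src then
        Finsupp.single (T.actP h α, T.φP h α * g, β) (r * (T.cP h α : ℓ)) else 0 := by
  simp [Fvg, avgF, smul_ite, Finsupp.smul_single, smul_eq_mul]

theorem Fe_single' (e : Γ.E) (α : Path Γ) (g : G) (β : Path Γ) (r : ℓ) :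
    T.Fe e (Finsupp.single (α, g, β) r) =
      if Γ.r e = α.src then
        Finsupp.single (⟨⟨Γ.s e, e :: α.edges⟩, g, β⟩) r else 0 := by
  simp [Fe, aeF, smul_ite, Finsupp.smul_single]

theorem Fst_single_nil (e : Γ.E) (v : Γ.V) (g : G) (β : Path Γ) (r : ℓ) :
    T.Fst e (Finsupp.single (⟨⟨v, []⟩, g, β⟩) r) =
      if v = Γ.s e then
        Finsupp.single (ofVertex Γ (Γ.r e), T.φ g (T.actE g⁻¹ e),
          β.comp (ofEdge Γ (T.actE g⁻¹ e))) (r * (T.c g (T.actE g⁻¹ e) : ℓ)) else 0 := by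
  simp [Fst, astF, smul_ite, Finsupp.smul_single, smul_eq_mul]

theorem Fst_single_cons (e e' : Γ.E) (v : Γ.V) (l : List Γ.E) (g : G) (β : Path Γ) (r : ℓ) :
    T.Fst e (Finsupp.single (⟨⟨v, e' :: l⟩, g, β⟩) r) =
      if e' = e ∧ v = Γ.s e then Finsupp.single (⟨⟨Γ.r e, l⟩, g, β⟩) r else 0 := by
  simp [Fst, astF, smul_ite, Finsupp.smul_single]

theorem Fv_mul_Fe (e : Γ.E) : T.Fv (Γ.s e) * T.Fe e = T.Fe e := by
  apply Finsupp.lhom_ext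
  rintro ⟨α, g, β⟩ r
  rw [Module.End.mul_apply, T.Fe_single']
  split_ifs with hc
  · rw [T.Fv_single', if_pos rfl]
  · simp [T.Fe_single', hc]

theorem rel_preserved : ∀ ⦃a b : FreeCohn ℓ Γ G⦄, CohnRel T a b → T.rho0 a = T.rho0 b := by
  intro a b h
  cases h with
  | v_eq v =>
    simp only [rho0_ι]
    show T.Fv v = T.Fvg v 1
    apply Finsupp.lhom_ext
    rintro ⟨α, g, β⟩ r
    rw [T.Fv_single', T.Fvg_single', T.actV_one, T.actP_one, T.φP_one, T.cP_one, one_mul]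
    simp
  | e_eq e =>
    simp only [rho0_ι, map_mul]
    show T.Fe e = T.Fe e * T.Fvg (Γ.r e) 1
    apply Finsupp.lhom_ext
    rintro ⟨α, g, β⟩ r
    rw [Module.End.mul_apply, T.Fvg_single', T.actV_one, T.actP_one, T.φP_one, T.cP_one,
      one_mul, Units.val_one, mul_one]
    split_ifs with hc
    · rfl
    · simp [T.Fe_single', hc]
  | st_eq e =>
    simp only [rho0_ι, map_mul]
    show T.Fst e = T.Fvg (T.actV 1 (Γ.r e)) 1 * (T.Fst e * T.Fv (Γ.s e))
    apply Finsupp.lhom_ext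
    rintro ⟨⟨va, la⟩, ga, βa⟩ r
    cases la with
    | nil =>
      rw [Module.End.mul_apply, Module.End.mul_apply, T.Fv_single', T.Fst_single_nil, src_mk]
      by_cases h1 : va = Γ.s e
      · rw [if_pos h1, if_pos h1.symm, T.Fst_single_nil, if_pos h1, T.Fvg_single']
        simp [T.actP_one, T.φP_one, T.cP_one, T.actV_one]
      · rw [if_neg h1, if_neg (fun hh => h1 hh.symm), map_zero, map_zero]
    | cons e' l =>
      rw [Module.End.mul_apply, Module.End.mul_apply, T.Fv_single', T.Fst_single_cons, src_mk]
      by_cases h1 : e' = e ∧ va = Γ.s e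
      · rw [if_pos h1, if_pos h1.2.symm, T.Fst_single_cons, if_pos h1, T.Fvg_single']
        simp [T.actP_one, T.φP_one, T.cP_one, T.actV_one]
      · rw [if_neg h1]
        by_cases h2 : Γ.s e = va
        · rw [if_pos h2, T.Fst_single_cons, if_neg h1, map_zero]
        · rw [if_neg h2, map_zero, map_zero]
  | eg_eq e g =>
    simp only [rho0_ι, map_mul]
    show T.Fe e * T.Fvg (Γ.r e) g =
      T.Fv (Γ.s e) * T.Fe e * T.Fvg (Γ.r e) g
    rw [T.Fv_mul_Fe]
  | gst_eq g e =>
    simp only [rho0_ι, map_mul]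
    show T.Fvg (T.actV g (Γ.r e)) g * (T.Fst e * T.Fv (Γ.s e)) =
      T.Fvg (T.actV g (Γ.r e)) g * T.Fst e * T.Fv (Γ.s e)
    rw [mul_assoc]
  | st_e e f =>
    by_cases hef : e = f
    · subst hef
      rw [if_pos rfl]
      simp only [rho0_ι, map_mul]
      show T.Fst e * T.Fe e = T.Fv (Γ.r e)
      apply Finsupp.lhom_ext
      rintro ⟨⟨va, la⟩, ga, βa⟩ r
      rw [Module.End.mul_apply, T.Fe_single', T.Fv_single']
      split_ifs with hc
      · rw [T.Fst_single_cons, if_pos ⟨rfl, rfl⟩, hc]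
      · simp
    · rw [if_neg hef]
      simp only [rho0_ι, map_mul, map_zero]
      show T.Fst e * T.Fe f = 0
      apply Finsupp.lhom_ext
      rintro ⟨⟨va, la⟩, ga, βa⟩ r
      rw [Module.End.mul_apply, T.Fe_single']
      split_ifs with hc
      · rw [T.Fst_single_cons, if_neg]
        · simp
        · rintro ⟨h1, -⟩; exact hef h1.symm
      · simp
  | vg_vg v g w h =>
    simp only [rho0_ι, map_mul]
    by_cases hc : v = T.actV g w
    · rw [if_pos hc, rho0_ι]
      show T.Fvg v g * T.Fvg w h = T.Fvg v (g * h)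
      apply Finsupp.lhom_ext
      rintro ⟨⟨va, la⟩, ga, βa⟩ r
      rw [Module.End.mul_apply, T.Fvg_single', apply_ite (T.Fvg v g), map_zero,
        T.Fvg_single', T.Fvg_single', T.actP_mul, T.φP_mul, T.cP_mul, T.actV_mul]
      simp only [T.actP_src, src_mk]
      split_ifs with h1 h2 h3
      · refine (if_pos h2).trans ?_
        rw [mul_assoc (T.φP g (T.actP h ⟨va, la⟩))]
        congr 1
        push_cast
        ring
      · exact if_neg h2
      · exfalso
        apply h1
        exact (T.actV_cancel g).mp (hc ▸ h3)
      · rfl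
    · rw [if_neg hc, map_zero]
      show T.Fvg v g * T.Fvg w h = 0
      apply Finsupp.lhom_ext
      rintro ⟨⟨va, la⟩, ga, βa⟩ r
      rw [Module.End.mul_apply, T.Fvg_single', apply_ite (T.Fvg v g), map_zero, T.Fvg_single']
      split_ifs with h1 h2
      · exact absurd (by rw [h1]; exact h2) hc
      · simp
      · simp
  | vg_e v g e =>
    by_cases hc : v = T.actV g (Γ.s e)
    · rw [if_pos hc]
      simp only [map_mul, map_smul, rho0_ι]
      show T.Fvg v g * T.Fe e =
        (T.c g e : ℓ) • (T.Fe (T.actE g e) * T.Fvg (Γ.r (T.actE g e)) (T.φ g e))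
      apply Finsupp.lhom_ext
      rintro ⟨⟨va, la⟩, ga, βa⟩ r
      rw [Module.End.mul_apply, T.Fe_single', apply_ite (T.Fvg v g), map_zero, T.Fvg_single',
        LinearMap.smul_apply, Module.End.mul_apply, T.Fvg_single',
        apply_ite (T.Fe (T.actE g e)), map_zero, T.Fe_single']
      simp only [src_mk, edges_mk, T.actP_mk, T.φP_mk, T.cP_mk, T.cL_cons, T.φL_cons,
        T.actL_cons, T.r_act, T.s_act, T.φ_actV, T.actV_cancel, hc, Units.val_mul,
        smul_ite, smul_zero, Finsupp.smul_single, smul_eq_mul, if_true, eq_self_iff_true]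
      split_ifs with h1
      · congr 1
        ring
      · rfl
    · rw [if_neg hc]
      simp only [map_mul, map_zero, rho0_ι]
      show T.Fvg v g * T.Fe e = 0
      apply Finsupp.lhom_ext
      rintro ⟨⟨va, la⟩, ga, βa⟩ r
      rw [Module.End.mul_apply, T.Fe_single', apply_ite (T.Fvg v g), map_zero, T.Fvg_single']
      simp only [src_mk]
      split_ifs <;> simp_all
  | st_vg e v h =>
    by_cases hc : v = Γ.s e
    · rw [if_pos hc]
      simp only [map_mul, map_smul, rho0_ι]
      show T.Fst e * T.Fvg v h = (T.c h (T.actE h⁻¹ e) : ℓ) •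
        (T.Fvg (T.actV (T.φ h (T.actE h⁻¹ e)) (Γ.r (T.actE h⁻¹ e))) (T.φ h (T.actE h⁻¹ e)) *
          (T.Fst (T.actE h⁻¹ e) * T.Fv (Γ.s (T.actE h⁻¹ e))))
      apply Finsupp.lhom_ext
      rintro ⟨⟨va, la⟩, ga, βa⟩ r
      have hsa : Γ.s (T.actE h⁻¹ e) = T.actV h⁻¹ (Γ.s e) := T.s_act h⁻¹ e
      have hra : T.actV h (Γ.r (T.actE h⁻¹ e)) = Γ.r e := by
        rw [T.r_act, T.actV_act_inv]
      cases la with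
      | nil =>
        rw [Module.End.mul_apply, T.Fvg_single', src_mk, LinearMap.smul_apply,
          Module.End.mul_apply, Module.End.mul_apply, T.Fv_single', src_mk]
        by_cases h1 : va = T.actV h⁻¹ (Γ.s e)
        · have h1' : T.actV h va = Γ.s e := by rw [h1, T.actV_act_inv]
          rw [if_pos (by rw [hc, ← h1']), if_pos (by rw [hsa, h1]),
            T.actP_mk, T.actL_nil, T.φP_mk, T.φL_nil, T.cP_mk, T.cL_nil,
            T.Fst_single_nil, if_pos h1', T.Fst_single_nil, if_pos (by rw [h1, hsa]),
            T.Fvg_single', ofVertex_src, if_pos rfl]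
          have hb : T.actE (h * ga)⁻¹ e = T.actE ga⁻¹ (T.actE h⁻¹ e) := by
            rw [mul_inv_rev, T.actE_mul]
          rw [hb]
          have hφ : T.φ (h * ga) (T.actE ga⁻¹ (T.actE h⁻¹ e)) =
              T.φ h (T.actE h⁻¹ e) * T.φ ga (T.actE ga⁻¹ (T.actE h⁻¹ e)) := by
            rw [T.φ_mul, T.actE_act_inv]
          have hcc : T.c (h * ga) (T.actE ga⁻¹ (T.actE h⁻¹ e)) =
              T.c h (T.actE h⁻¹ e) * T.c ga (T.actE ga⁻¹ (T.actE h⁻¹ e)) := by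
            rw [T.c_mul, T.actE_act_inv]
          rw [hφ, hcc]
          simp only [T.actP_ofVertex, T.φP_ofVertex, T.cP_ofVertex, T.φ_actV, hra,
            Units.val_mul, Units.val_one, Finsupp.smul_single, smul_eq_mul, mul_one]
          congr 1
          ring
        · have h1' : ¬ T.actV h va = Γ.s e := fun hh => h1 (by rw [← hh, T.actV_inv_act])
          rw [if_neg (by rw [hc]; exact fun hh => h1' hh.symm), if_neg (by rw [hsa]; exact fun hh => h1 hh.symm), map_zero, map_zero, map_zero, smul_zero]
      | cons e' l =>
        rw [Module.End.mul_apply, T.Fvg_single', src_mk, LinearMap.smul_apply,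
          Module.End.mul_apply, Module.End.mul_apply, T.Fv_single', src_mk]
        by_cases h1 : va = T.actV h⁻¹ (Γ.s e)
        · have hAv : T.actV h va = Γ.s e := by rw [h1, T.actV_act_inv]
          rw [if_pos (by rw [hc, ← hAv]), if_pos (by rw [hsa, h1]), T.actP_mk, T.actL_cons,
            T.φP_mk, T.φL_cons, T.cP_mk, T.cL_cons, T.Fst_single_cons, T.Fst_single_cons]
          by_cases h2 : e' = T.actE h⁻¹ e
          · have hAe : T.actE h e' = e := by rw [h2, T.actE_act_inv]
            rw [if_pos ⟨hAe, hAv⟩, if_pos ⟨h2, by rw [hsa]; exact h1⟩, T.Fvg_single', src_mk,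
              if_pos rfl, T.actP_mk, T.φP_mk, T.cP_mk, h2]
            simp only [T.φ_actV, hra, Units.val_mul, Finsupp.smul_single, smul_eq_mul]
            congr 1
            ring
          · rw [if_neg, if_neg, map_zero, smul_zero]
            · rintro ⟨h3, -⟩; exact h2 h3
            · rintro ⟨h3, -⟩
              exact h2 (by rw [← h3, T.actE_inv_act])
        · have hFv : ¬ Γ.s (T.actE h⁻¹ e) = va := fun hh => h1 (by rw [← hh, hsa])
          rw [if_neg hFv, map_zero, map_zero, smul_zero]
          split_ifs with h4
          · rw [T.actP_mk, T.actL_cons, T.Fst_single_cons, if_neg]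
            rintro ⟨-, h5⟩
            exact h1 (by rw [← h5, T.actV_inv_act])
          · rw [map_zero]
    · rw [if_neg hc, map_zero]
      simp only [map_mul, rho0_ι]
      show T.Fst e * T.Fvg v h = 0
      apply Finsupp.lhom_ext
      rintro ⟨⟨va, la⟩, ga, βa⟩ r
      rw [Module.End.mul_apply, T.Fvg_single', src_mk]
      cases la with
      | nil =>
        split_ifs with h1
        · rw [T.actP_mk, T.actL_nil, T.Fst_single_nil, if_neg, LinearMap.zero_apply]
          rw [h1] at hc
          exact hc
        · simp
      | cons e' l =>
        split_ifs with h1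
        · rw [T.actP_mk, T.actL_cons, T.Fst_single_cons, if_neg, LinearMap.zero_apply]
          rintro ⟨-, h2⟩
          rw [h1] at hc
          exact hc h2
        · simp

end TwistedEP
namespace TwistedEP

open DirGraph

variable {ℓ : Type} [CommRing ℓ] {Γ : DirGraph} {G : Type} [Group G] (T : TwistedEP ℓ Γ G)

/-- The representation of the Cohn algebra on `MM`. -/
def rho : CQ T →ₐ[ℓ] Module.End ℓ (MM ℓ Γ G) :=
  RingQuot.liftAlgHom ℓ ⟨T.rho0, T.rel_preserved⟩

@[simp] theorem rho_mkC (x : FreeCohn ℓ Γ G) : T.rho (T.mkC x) = T.rho0 x :=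
  RingQuot.liftAlgHom_mkAlgHom_apply ..

@[simp] theorem rho_xv (v : Γ.V) : T.rho (T.xv v) = T.Fv v := by
  rw [xv, rho_mkC, rho0_ι]; rfl
@[simp] theorem rho_xvg (v : Γ.V) (g : G) : T.rho (T.xvg v g) = T.Fvg v g := by
  rw [xvg, rho_mkC, rho0_ι]; rfl
@[simp] theorem rho_xe (e : Γ.E) : T.rho (T.xe e) = T.Fe e := by
  rw [xe, rho_mkC, rho0_ι]; rfl
@[simp] theorem rho_xst (e : Γ.E) : T.rho (T.xst e) = T.Fst e := by
  rw [xst, rho_mkC, rho0_ι]; rfl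

/-- The product of the edges of a list, in the Cohn algebra. -/
def PP (l : List Γ.E) : CQ T := l.foldl (fun a e => a * T.xe e) 1

/-- The product of the starred edges of a list in reverse order, in the Cohn algebra. -/
def SS (l : List Γ.E) : CQ T := l.foldr (fun e a => a * T.xst e) 1

theorem foldl_mul (x y : CQ T) (l : List Γ.E) :
    l.foldl (fun a e => a * T.xe e) (x * y) = x * l.foldl (fun a e => a * T.xe e) y := by
  induction l generalizing y with
  | nil => rfl
  | cons e l ih =>
    show l.foldl _ (x * y * T.xe e) = _
    rw [mul_assoc, ih]
    rfl

theorem foldr_mul (x : CQ T) (l : List Γ.E) :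
    l.foldr (fun e a => a * T.xst e) x = x * T.SS l := by
  induction l with
  | nil => exact (mul_one x).symm
  | cons e l ih =>
    show l.foldr _ x * T.xst e = x * (T.SS l * T.xst e)
    rw [ih, mul_assoc]

@[simp] theorem PP_nil : T.PP ([] : List Γ.E) = 1 := rfl

@[simp] theorem SS_nil : T.SS ([] : List Γ.E) = 1 := rfl

theorem SS_cons (e : Γ.E) (l : List Γ.E) : T.SS (e :: l) = T.SS l * T.xst e := rfl

theorem PP_cons (e : Γ.E) (l : List Γ.E) : T.PP (e :: l) = T.xe e * T.PP l := by
  show l.foldl _ (1 * T.xe e) = _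
  rw [one_mul, ← mul_one (T.xe e), T.foldl_mul, mul_one]
  rfl

theorem pathElem_eq (p : Path Γ) : T.pathElem p = T.xv p.src * T.PP p.edges := by
  show p.edges.foldl _ (T.xv p.src) = _
  rw [← mul_one (T.xv p.src), T.foldl_mul, mul_one]
  rfl

theorem starElem_eq (p : Path Γ) : T.starElem p = T.xv p.rng * T.SS p.edges :=
  T.foldr_mul _ _

theorem rho_PP (l : List Γ.E) : ∀ (v : Γ.V), (∀ e ∈ l.head?, Γ.s e = v) →
    l.Chain' (fun e f => Γ.r e = Γ.s f) → ∀ (g : G) (β : Path Γ),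
    T.rho (T.PP l) (Finsupp.single (ofVertex Γ ((DirGraph.Path.mk v l).rng), g, β) 1) =
      Finsupp.single (⟨DirGraph.Path.mk v l, g, β⟩) 1 := by
  induction l with
  | nil =>
    intro v _ _ g β
    simp only [PP_nil, map_one, Module.End.one_apply]
    rfl
  | cons e l ih =>
    intro v hh hc g β
    obtain ⟨hh2, hc2⟩ := List.isChain_cons.mp hc
    have h1 : (DirGraph.Path.mk v (e :: l)).rng = (DirGraph.Path.mk (Γ.r e) l).rng :=
      DirGraph.rng_cons ..
    rw [T.PP_cons, map_mul, Module.End.mul_apply, rho_xe, h1,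
      ih (Γ.r e) (fun f hf => (hh2 f hf).symm) hc2 g β, T.Fe_single', src_mk, if_pos rfl,
      edges_mk, hh e rfl]

theorem rho_SS_single (lb : List Γ.E) : ∀ (vb : Γ.V), (∀ e ∈ lb.head?, Γ.s e = vb) →
    lb.Chain' (fun e f => Γ.r e = Γ.s f) →
    ∀ (la : List Γ.E) (va : Γ.V), (∀ e ∈ la.head?, Γ.s e = va) →
    la.Chain' (fun e f => Γ.r e = Γ.s f) → la.length ≤ lb.length →
    ∀ (β : Path Γ),
    T.rho (T.SS lb) (Finsupp.single (⟨DirGraph.Path.mk va la, 1, β⟩) 1) =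
      if la <+: lb ∧ (lb ≠ [] → va = vb) then
        Finsupp.single (ofVertex Γ ((DirGraph.Path.mk va lb).rng), 1,
          DirGraph.Path.mk β.src (β.edges ++ lb.drop la.length)) 1
      else 0 := by
  induction lb with
  | nil =>
    intro vb _ _ la va hhA _ hlen β
    have hla : la = [] := List.length_eq_zero_iff.mp (Nat.le_zero.mp hlen)
    subst hla
    rw [if_pos ⟨List.nil_prefix, fun h => absurd rfl h⟩]
    simp only [SS_nil, map_one, Module.End.one_apply, List.drop_nil, List.append_nil]
    rfl
  | cons e lb ih =>
    intro vb hhB hcB la va hhA hcA hlen β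
    obtain ⟨hh2, hc2⟩ := List.isChain_cons.mp hcB
    have hvb : Γ.s e = vb := hhB e rfl
    rw [T.SS_cons, map_mul, Module.End.mul_apply, rho_xst]
    cases la with
    | nil =>
      rw [T.Fst_single_nil]
      by_cases hva : va = Γ.s e
      · rw [if_pos hva]
        simp only [inv_one, T.actE_one, T.φ_one, T.c_one, Units.val_one, mul_one, one_mul]
        have hov : ofVertex Γ (Γ.r e) = DirGraph.Path.mk (Γ.r e) [] := rfl
        rw [hov, ih (Γ.r e) (fun f hf => (hh2 f hf).symm) hc2 [] (Γ.r e) (by simp)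
            List.isChain_nil (Nat.zero_le _) (β.comp (ofEdge Γ e)),
          if_pos ⟨List.nil_prefix, fun _ => rfl⟩,
          if_pos ⟨List.nil_prefix, fun _ => hva.trans hvb⟩]
        have hr2 : (DirGraph.Path.mk va (e :: lb)).rng = (DirGraph.Path.mk (Γ.r e) lb).rng :=
          DirGraph.rng_cons ..
        rw [hr2]
        simp [List.append_assoc]
      · rw [if_neg hva, map_zero, if_neg]
        rintro ⟨-, hcond⟩
        exact hva ((hcond (List.cons_ne_nil _ _)).trans hvb.symm)
    | cons a la =>
      rw [T.Fst_single_cons]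
      obtain ⟨hh2A, hc2A⟩ := List.isChain_cons.mp hcA
      by_cases hae : a = e ∧ va = Γ.s e
      · rw [if_pos hae]
        rw [ih (Γ.r e) (fun f hf => (hh2 f hf).symm) hc2 la (Γ.r e)
            (fun f hf => by rw [← hae.1]; exact (hh2A f hf).symm) hc2A
            (Nat.succ_le_succ_iff.mp hlen) β]
        by_cases hpre : la <+: lb
        · rw [if_pos ⟨hpre, fun _ => rfl⟩,
            if_pos ⟨List.cons_prefix_cons.mpr ⟨hae.1, hpre⟩, fun _ => hae.2.trans hvb⟩]
          have hr2 : (DirGraph.Path.mk va (e :: lb)).rng = (DirGraph.Path.mk (Γ.r e) lb).rng :=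
            DirGraph.rng_cons ..
          rw [hr2]
          simp
        · rw [if_neg (fun hh => hpre hh.1),
            if_neg (fun hh => hpre (List.cons_prefix_cons.mp hh.1).2)]
      · rw [if_neg hae, map_zero, if_neg]
        rintro ⟨hp, hcond⟩
        obtain ⟨h1, -⟩ := List.cons_prefix_cons.mp hp
        exact hae ⟨h1, by
          have hv : va = Γ.s a := (hhA a rfl).symm
          rw [hv, h1]⟩

end TwistedEP
namespace DirGraph
theorem Path.ext' {Γ : DirGraph} {p q : Path Γ} (h1 : p.src = q.src)
    (h2 : p.edges = q.edges) : p = q := by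
  cases p; cases q; cases h1; cases h2; rfl
end DirGraph

namespace TwistedEP

open DirGraph

variable {ℓ : Type} [CommRing ℓ] {Γ : DirGraph} {G : Type} [Group G] (T : TwistedEP ℓ Γ G)

theorem rho_mix (α : Path Γ) (g : G) (β : Path Γ) (hα : α.IsGood) (hβ : β.IsGood)
    (hr : T.actV g β.rng = α.rng) (β₀ : Path Γ) (hβ₀ : β₀.IsGood)
    (hlen : β₀.edges.length ≤ β.edges.length) :
    T.rho (T.mixElem α g β) (Finsupp.single (β₀, 1, β₀) 1) =
      if β₀.edges <+: β.edges ∧ β₀.src = β.src then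
        Finsupp.single (⟨α, g, β⟩) 1
      else 0 := by
  obtain ⟨vA, lA⟩ := α
  obtain ⟨vb, lb⟩ := β
  obtain ⟨v0, l0⟩ := β₀
  rw [mixElem, map_mul, map_mul, T.starElem_eq, map_mul, rho_xv, rho_xvg,
    Module.End.mul_apply, Module.End.mul_apply, Module.End.mul_apply,
    T.rho_SS_single lb vb hβ.1 hβ.2 l0 v0 hβ₀.1 hβ₀.2 hlen ⟨v0, l0⟩]
  by_cases hpre : l0 <+: lb
  · by_cases hv : v0 = vb
    · have c1 : l0 <+: lb ∧ (lb ≠ [] → v0 = vb) := ⟨hpre, fun _ => hv⟩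
      have c2 : l0 <+: lb ∧ (DirGraph.Path.mk v0 l0).src = (DirGraph.Path.mk vb lb).src :=
        ⟨hpre, hv⟩
      rw [if_pos c1, if_pos c2]
      subst hv
      have hD : DirGraph.Path.mk (DirGraph.Path.mk v0 l0).src
          ((DirGraph.Path.mk v0 l0).edges ++ lb.drop l0.length) = DirGraph.Path.mk v0 lb := by
        exact DirGraph.Path.ext' rfl (List.prefix_iff_eq_append.mp hpre)
      rw [hD, T.Fv_single', ofVertex_src, if_pos rfl, T.Fvg_single', ofVertex_src,
        if_pos hr.symm, T.actP_ofVertex, T.φP_ofVertex, T.cP_ofVertex, hr]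
      simp only [mul_one, one_mul, Units.val_one]
      rw [T.pathElem_eq, map_mul, Module.End.mul_apply, rho_xv, src_mk, edges_mk,
        T.rho_PP lA vA hα.1 hα.2 g (DirGraph.Path.mk v0 lb),
        T.Fv_single', src_mk, if_pos rfl]
    · have c2 : ¬ (l0 <+: lb ∧ (DirGraph.Path.mk v0 l0).src = (DirGraph.Path.mk vb lb).src) :=
        fun hh => hv hh.2
      rw [if_neg c2]
      cases lb with
      | nil =>
        have hl0 : l0 = [] := List.prefix_nil.mp hpre
        subst hl0
        have c1 : ([] : List Γ.E) <+: [] ∧ (([] : List Γ.E) ≠ [] → v0 = vb) :=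
          ⟨List.nil_prefix, fun h => absurd rfl h⟩
        rw [if_pos c1, T.Fv_single', ofVertex_src, if_neg (fun hh => hv hh.symm),
          map_zero, map_zero]
      | cons eb lbt =>
        have c1 : ¬ (l0 <+: eb :: lbt ∧ (eb :: lbt ≠ [] → v0 = vb)) :=
          fun hh => hv (hh.2 (List.cons_ne_nil _ _))
        rw [if_neg c1, map_zero, map_zero, map_zero]
  · have c1 : ¬ (l0 <+: lb ∧ (lb ≠ [] → v0 = vb)) := fun hh => hpre hh.1
    have c2 : ¬ (l0 <+: lb ∧ (DirGraph.Path.mk v0 l0).src = (DirGraph.Path.mk vb lb).src) :=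
      fun hh => hpre hh.1
    rw [if_neg c1, if_neg c2, map_zero, map_zero, map_zero]

theorem linearIndependent_BFam : LinearIndependent ℓ T.BFam := by
  rw [linearIndependent_iff]
  intro l hl
  by_contra hne
  obtain ⟨i₀, hi₀, hmin⟩ := l.support.exists_min_image (fun i => i.1.2.2.edges.length)
      (Finsupp.support_nonempty_iff.mpr hne)
  have h0 := congrArg
    (fun z : CQ T => (T.rho z (Finsupp.single (i₀.1.2.2, 1, i₀.1.2.2) 1)) i₀.1) hl
  simp only [map_zero, LinearMap.zero_apply, Finsupp.coe_zero, Pi.zero_apply] at h0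
  rw [Finsupp.linearCombination_apply, Finsupp.sum, map_sum] at h0
  simp only [map_smul, LinearMap.coe_sum, Finset.sum_apply, LinearMap.smul_apply,
    Finsupp.coe_finset_sum, Finsupp.smul_apply, smul_eq_mul] at h0
  rw [Finset.sum_eq_single i₀] at h0
  · -- main term computes to l i₀
    rw [BFam, T.rho_mix i₀.1.1 i₀.1.2.1 i₀.1.2.2 i₀.2.1 i₀.2.2.1 i₀.2.2.2 i₀.1.2.2
        i₀.2.2.1 le_rfl, if_pos ⟨List.prefix_refl _, rfl⟩] at h0
    have : (i₀.1.1, i₀.1.2.1, i₀.1.2.2) = i₀.1 := rfl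
    rw [this, Finsupp.single_apply, if_pos rfl, mul_one] at h0
    exact (Finsupp.mem_support_iff.mp hi₀) h0
  · intro i hi hine
    rw [BFam, T.rho_mix i.1.1 i.1.2.1 i.1.2.2 i.2.1 i.2.2.1 i.2.2.2 i₀.1.2.2
        i₀.2.2.1 (hmin i hi)]
    split_ifs with hcond
    · rw [Finsupp.single_apply, if_neg, mul_zero]
      intro hX
      apply hine
      apply Subtype.ext
      have : (i.1.1, i.1.2.1, i.1.2.2) = i.1 := rfl
      rw [← this, hX]
    · rw [Finsupp.coe_zero, Pi.zero_apply, mul_zero]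
  · intro hni
    exact absurd hi₀ hni
end TwistedEP
namespace TwistedEP

open DirGraph

variable {ℓ : Type} [CommRing ℓ] {Γ : DirGraph} {G : Type} [Group G] (T : TwistedEP ℓ Γ G)

theorem xv_eq (v : Γ.V) : T.xv v = T.xvg v 1 :=
  RingQuot.mkAlgHom_rel ℓ (CohnRel.v_eq v)

theorem xe_eq (e : Γ.E) : T.xe e = T.xeg e 1 :=
  RingQuot.mkAlgHom_rel ℓ (CohnRel.e_eq e)

theorem xst_eq (e : Γ.E) : T.xst e = T.xgst 1 e :=
  RingQuot.mkAlgHom_rel ℓ (CohnRel.st_eq e)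

theorem xeg_eq (e : Γ.E) (g : G) :
    T.xeg e g = T.xv (Γ.s e) * T.xe e * T.xvg (Γ.r e) g := by
  have h := RingQuot.mkAlgHom_rel ℓ (CohnRel.eg_eq (T := T) e g)
  rw [map_mul, map_mul] at h
  exact h

theorem xgst_eq (g : G) (e : Γ.E) :
    T.xgst g e = T.xvg (T.actV g (Γ.r e)) g * T.xst e * T.xv (Γ.s e) := by
  have h := RingQuot.mkAlgHom_rel ℓ (CohnRel.gst_eq (T := T) g e)
  rw [map_mul, map_mul] at h
  exact h

theorem xst_mul_xe (e f : Γ.E) :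
    T.xst e * T.xe f = if e = f then T.xv (Γ.r e) else 0 := by
  have h := RingQuot.mkAlgHom_rel ℓ (CohnRel.st_e (T := T) e f)
  rw [map_mul, apply_ite (T.mkC), map_zero] at h
  exact h

theorem xvg_mul_xvg (v : Γ.V) (g : G) (w : Γ.V) (h : G) :
    T.xvg v g * T.xvg w h = if v = T.actV g w then T.xvg v (g * h) else 0 := by
  have hh := RingQuot.mkAlgHom_rel ℓ (CohnRel.vg_vg (T := T) v g w h)
  rw [map_mul, apply_ite (T.mkC), map_zero] at hh
  exact hh

theorem xvg_mul_xe (v : Γ.V) (g : G) (e : Γ.E) :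
    T.xvg v g * T.xe e = if v = T.actV g (Γ.s e) then
      (T.c g e : ℓ) • T.xeg (T.actE g e) (T.φ g e) else 0 := by
  have hh := RingQuot.mkAlgHom_rel ℓ (CohnRel.vg_e (T := T) v g e)
  rw [map_mul, apply_ite (T.mkC), map_zero, map_smul] at hh
  exact hh

theorem xst_mul_xvg (e : Γ.E) (v : Γ.V) (g : G) :
    T.xst e * T.xvg v g = if v = Γ.s e then
      (T.c g (T.actE g⁻¹ e) : ℓ) •
        T.xgst (T.φ g (T.actE g⁻¹ e)) (T.actE g⁻¹ e) else 0 := by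
  have hh := RingQuot.mkAlgHom_rel ℓ (CohnRel.st_vg (T := T) e v g)
  rw [map_mul, apply_ite (T.mkC), map_zero, map_smul] at hh
  exact hh

theorem xv_mul_xvg (v w : Γ.V) (h : G) :
    T.xv v * T.xvg w h = if v = w then T.xvg v h else 0 := by
  rw [T.xv_eq, T.xvg_mul_xvg, T.actV_one, one_mul]

theorem xvg_mul_xv (v : Γ.V) (g : G) (w : Γ.V) :
    T.xvg v g * T.xv w = if v = T.actV g w then T.xvg v g else 0 := by
  rw [T.xv_eq, T.xvg_mul_xvg, mul_one]

theorem xv_mul_xv (v w : Γ.V) :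
    T.xv v * T.xv w = if v = w then T.xv v else 0 := by
  rw [T.xv_eq w, T.xv_mul_xvg, ← T.xv_eq]

theorem xv_mul_xe (e : Γ.E) : T.xv (Γ.s e) * T.xe e = T.xe e := by
  rw [T.xv_eq, T.xvg_mul_xe, if_pos (T.actV_one (Γ.s e)).symm, T.actE_one, T.φ_one,
    T.c_one, Units.val_one, one_smul, ← T.xe_eq]

theorem xe_mul_xvg (e : Γ.E) (g : G) : T.xe e * T.xvg (Γ.r e) g = T.xeg e g := by
  rw [show T.xe e = T.xv (Γ.s e) * T.xe e * T.xvg (Γ.r e) 1 from by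
      rw [← T.xeg_eq, ← T.xe_eq],
    mul_assoc, T.xvg_mul_xvg, if_pos (T.actV_one (Γ.r e)).symm, one_mul, ← T.xeg_eq]

theorem xe_mul_xv' (e : Γ.E) (w : Γ.V) :
    T.xe e * T.xv w = if Γ.r e = w then T.xe e else 0 := by
  rw [show T.xe e = T.xv (Γ.s e) * T.xe e * T.xvg (Γ.r e) 1 from by
      rw [← T.xeg_eq, ← T.xe_eq],
    mul_assoc, T.xvg_mul_xv, T.actV_one, mul_ite, mul_zero, ← T.xeg_eq, ← T.xe_eq]

theorem xe_mul_xv (e : Γ.E) : T.xe e * T.xv (Γ.r e) = T.xe e := by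
  rw [T.xe_mul_xv', if_pos rfl]

theorem xst_mul_xv (e : Γ.E) : T.xst e * T.xv (Γ.s e) = T.xst e := by
  rw [T.xv_eq, T.xst_mul_xvg, if_pos rfl, inv_one, T.actE_one, T.φ_one, T.c_one,
    Units.val_one, one_smul, ← T.xst_eq]

theorem xgst_eq' (g : G) (e : Γ.E) :
    T.xgst g e = T.xvg (T.actV g (Γ.r e)) g * T.xst e := by
  rw [T.xgst_eq, mul_assoc, T.xst_mul_xv]

theorem xv_mul_xst (e : Γ.E) : T.xv (Γ.r e) * T.xst e = T.xst e := by
  conv_lhs => rw [T.xst_eq, T.xgst_eq', T.actV_one]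
  rw [← mul_assoc, T.xv_mul_xvg, if_pos rfl]
  conv_rhs => rw [T.xst_eq, T.xgst_eq', T.actV_one]

@[simp] theorem rng_mk_nil (v : Γ.V) : (DirGraph.Path.mk v []).rng = v := rfl

theorem pathElem_nil (v : Γ.V) : T.pathElem (DirGraph.Path.mk v []) = T.xv v := rfl

theorem starElem_nil (v : Γ.V) : T.starElem (DirGraph.Path.mk v []) = T.xv v := rfl

theorem pathElem_cons (e : Γ.E) (l : List Γ.E) (v : Γ.V) (h : Γ.s e = v) :
    T.pathElem (DirGraph.Path.mk v (e :: l)) =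
      T.xe e * T.pathElem (DirGraph.Path.mk (Γ.r e) l) := by
  rw [T.pathElem_eq, T.pathElem_eq, src_mk, src_mk, edges_mk, edges_mk, T.PP_cons,
    ← mul_assoc, ← h, T.xv_mul_xe, ← mul_assoc, T.xe_mul_xv', if_pos rfl]

theorem starElem_cons (e : Γ.E) (l : List Γ.E) (v : Γ.V) :
    T.starElem (DirGraph.Path.mk v (e :: l)) =
      T.starElem (DirGraph.Path.mk (Γ.r e) l) * T.xst e := by
  rw [T.starElem_eq, T.starElem_eq, edges_mk, edges_mk, T.SS_cons, ← mul_assoc,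
    DirGraph.rng_cons]

theorem star_snoc (a : Γ.E) : ∀ (l : List Γ.E) (w : Γ.V),
    (DirGraph.Path.mk w l).rng = Γ.s a →
    T.starElem (DirGraph.Path.mk w (l ++ [a])) =
      T.xst a * T.starElem (DirGraph.Path.mk w l) := by
  intro l
  induction l with
  | nil =>
    intro w h
    rw [rng_mk_nil] at h
    rw [List.nil_append, T.starElem_cons, T.starElem_nil, T.starElem_nil, T.xv_mul_xst,
      h, T.xst_mul_xv]
  | cons e l ih =>
    intro w h
    rw [DirGraph.rng_cons] at h
    rw [List.cons_append, T.starElem_cons, ih (Γ.r e) h, mul_assoc, ← T.starElem_cons]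

theorem xv_mul_path (w : Γ.V) (p : Path Γ) (hp : p.IsGood) :
    T.xv w * T.pathElem p = if w = p.src then T.pathElem p else 0 := by
  obtain ⟨v, l⟩ := p
  cases l with
  | nil =>
    rw [T.pathElem_nil, T.xv_mul_xv, src_mk]
    split_ifs with h1
    · rw [h1]
    · rfl
  | cons e l =>
    have hse : Γ.s e = v := hp.1 e rfl
    rw [T.pathElem_cons e l v hse, ← mul_assoc, src_mk]
    by_cases hw : w = v
    · subst hw
      rw [← hse, T.xv_mul_xe, if_pos rfl]
    · have hz : T.xv w * T.xe e = 0 := by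
        rw [← T.xv_mul_xe e, ← mul_assoc, T.xv_mul_xv, hse, if_neg hw, zero_mul]
      rw [hz, zero_mul, if_neg hw]

theorem xe_mul_path (e : Γ.E) (p : Path Γ) (hp : p.IsGood) :
    T.xe e * T.pathElem p =
      if Γ.r e = p.src then T.pathElem ((ofEdge Γ e).comp p) else 0 := by
  obtain ⟨v, l⟩ := p
  cases l with
  | nil =>
    rw [T.pathElem_nil, T.xe_mul_xv', src_mk]
    split_ifs with hcond
    · rw [show (ofEdge Γ e).comp (DirGraph.Path.mk v []) = DirGraph.Path.mk (Γ.s e) [e] from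
          DirGraph.Path.ext' rfl (by simp),
        T.pathElem_cons e [] (Γ.s e) rfl, T.pathElem_nil, T.xe_mul_xv]
    · rfl
  | cons f l =>
    have hsf : Γ.s f = v := hp.1 f rfl
    rw [T.pathElem_cons f l v hsf, ← mul_assoc, src_mk]
    have key : T.xe e * T.xe f = (if Γ.r e = Γ.s f then T.xe e else 0) * T.xe f := by
      conv_lhs => rw [← T.xv_mul_xe f, ← mul_assoc]
      rw [T.xe_mul_xv']
    rw [key, hsf]
    split_ifs with hcond
    · rw [mul_assoc, ← T.pathElem_cons f l v hsf,
        show (ofEdge Γ e).comp (DirGraph.Path.mk v (f :: l)) =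
          DirGraph.Path.mk (Γ.s e) (e :: f :: l) from DirGraph.Path.ext' rfl (by simp),
        T.pathElem_cons e (f :: l) (Γ.s e) rfl, hcond]
    · rw [zero_mul, zero_mul]

theorem xvg_mul_path (l : List Γ.E) : ∀ (v : Γ.V) (w : Γ.V) (h : G),
    (∀ e ∈ l.head?, Γ.s e = v) → l.Chain' (fun e f => Γ.r e = Γ.s f) →
    T.xvg w h * T.pathElem (DirGraph.Path.mk v l) =
      if w = T.actV h v then
        (T.cL h l : ℓ) • (T.pathElem (DirGraph.Path.mk (T.actV h v) (T.actL h l)) *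
          T.xvg ((DirGraph.Path.mk (T.actV h v) (T.actL h l)).rng) (T.φL h l))
      else 0 := by
  induction l with
  | nil =>
    intro v w h _ _
    simp only [T.actL_nil, T.cL_nil, Units.val_one, one_smul, T.φL_nil]
    rw [T.pathElem_nil, T.pathElem_nil, rng_mk_nil, T.xvg_mul_xv, T.xv_mul_xvg, if_pos rfl]
    split_ifs with hw
    · rw [hw]
    · rfl
  | cons e l ih =>
    intro v w h hh hc
    have hse : Γ.s e = v := hh e rfl
    obtain ⟨hh2, hc2⟩ := List.isChain_cons.mp hc
    rw [T.pathElem_cons e l v hse, ← mul_assoc, T.xvg_mul_xe, hse]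
    by_cases hw : w = T.actV h v
    · rw [if_pos hw, if_pos hw, smul_mul_assoc, ← T.xe_mul_xvg, mul_assoc]
      have hre : Γ.r (T.actE h e) = T.actV (T.φ h e) (Γ.r e) := by
        rw [T.r_act, T.φ_actV]
      rw [hre, ih (Γ.r e) (T.actV (T.φ h e) (Γ.r e)) (T.φ h e)
          (fun f hf => (hh2 f hf).symm) hc2, if_pos rfl]
      rw [T.cL_cons, T.actL_cons, T.φL_cons, Units.val_mul,
        T.pathElem_cons (T.actE h e) (T.actL (T.φ h e) l) (T.actV h v)
          (by rw [T.s_act, hse]), DirGraph.rng_cons, hre]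
      rw [mul_smul_comm, smul_smul, mul_assoc]
    · rw [if_neg hw, if_neg hw, zero_mul]

theorem rng_comp_ofEdge (_T : TwistedEP ℓ Γ G) (e : Γ.E) (p : Path Γ) (h : Γ.r e = p.src) :
    ((ofEdge Γ e).comp p).rng = p.rng := by
  obtain ⟨v, l⟩ := p
  rw [src_mk] at h
  rw [show (ofEdge Γ e).comp (DirGraph.Path.mk v l) = DirGraph.Path.mk (Γ.s e) (e :: l) from
      DirGraph.Path.ext' rfl (by simp),
    DirGraph.rng_cons, h]

end TwistedEP
namespace TwistedEP

open DirGraph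

variable {ℓ : Type} [CommRing ℓ] {Γ : DirGraph} {G : Type} [Group G] (T : TwistedEP ℓ Γ G)

theorem mix_mem (α : Path Γ) (g : G) (β : Path Γ) (h1 : α.IsGood) (h2 : β.IsGood)
    (h3 : T.actV g β.rng = α.rng) :
    T.mixElem α g β ∈ Submodule.span ℓ (Set.range T.BFam) :=
  Submodule.subset_span ⟨⟨(α, g, β), h1, h2, h3⟩, rfl⟩

theorem xv_mul_BFam (w : Γ.V) (i : T.BIdx) :
    T.xv w * T.BFam i ∈ Submodule.span ℓ (Set.range T.BFam) := by
  obtain ⟨⟨α, g, β⟩, h1, h2, h3⟩ := i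
  show T.xv w * T.mixElem α g β ∈ _
  rw [mixElem, ← mul_assoc, ← mul_assoc, T.xv_mul_path w α h1, ite_mul, ite_mul,
    zero_mul, zero_mul]
  split_ifs
  · exact T.mix_mem α g β h1 h2 h3
  · exact zero_mem _

theorem xvg_mul_BFam (w : Γ.V) (h : G) (i : T.BIdx) :
    T.xvg w h * T.BFam i ∈ Submodule.span ℓ (Set.range T.BFam) := by
  obtain ⟨⟨⟨vA, lA⟩, g, β⟩, h1, h2, h3⟩ := i
  show T.xvg w h * T.mixElem ⟨vA, lA⟩ g β ∈ _
  rw [mixElem, ← mul_assoc, ← mul_assoc, T.xvg_mul_path lA vA w h h1.1 h1.2, ite_mul,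
    ite_mul, zero_mul, zero_mul]
  split_ifs with hcond
  · rw [smul_mul_assoc, smul_mul_assoc, mul_assoc _
      (T.xvg ((DirGraph.Path.mk (T.actV h vA) (T.actL h lA)).rng) (T.φL h lA)) _,
      T.xvg_mul_xvg,
      if_pos (by rw [show DirGraph.Path.mk (T.actV h vA) (T.actL h lA) =
        T.actP h (DirGraph.Path.mk vA lA) from rfl, T.rng_actP, T.φ_actV_edges])]
    apply Submodule.smul_mem
    have hgood : (DirGraph.Path.mk (T.actV h vA) (T.actL h lA)).IsGood :=
      T.isGood_actP h h1
    have hcond2 : T.actV (T.φL h lA * g) β.rng =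
        (DirGraph.Path.mk (T.actV h vA) (T.actL h lA)).rng := by
      rw [T.actV_mul, h3, T.φ_actV_edges,
        show DirGraph.Path.mk (T.actV h vA) (T.actL h lA) =
          T.actP h (DirGraph.Path.mk vA lA) from rfl, T.rng_actP]
    exact T.mix_mem _ _ _ hgood h2 hcond2
  · exact zero_mem _

theorem xe_mul_BFam (e : Γ.E) (i : T.BIdx) :
    T.xe e * T.BFam i ∈ Submodule.span ℓ (Set.range T.BFam) := by
  obtain ⟨⟨α, g, β⟩, h1, h2, h3⟩ := i
  show T.xe e * T.mixElem α g β ∈ _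
  rw [mixElem, ← mul_assoc, ← mul_assoc, T.xe_mul_path e α h1, ite_mul, ite_mul,
    zero_mul, zero_mul]
  split_ifs with hcond
  · rw [show α.rng = ((ofEdge Γ e).comp α).rng from (T.rng_comp_ofEdge e α hcond).symm]
    exact T.mix_mem _ g β
      (DirGraph.isGood_comp (ofEdge_isGood Γ e) h1 (by rw [rng_ofEdge]; exact hcond)) h2
      (by rw [T.rng_comp_ofEdge e α hcond]; exact h3)
  · exact zero_mem _

theorem xst_mul_BFam (e : Γ.E) (i : T.BIdx) :
    T.xst e * T.BFam i ∈ Submodule.span ℓ (Set.range T.BFam) := by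
  obtain ⟨⟨⟨vA, lA⟩, g, ⟨vB, lB⟩⟩, h1, h2, h3⟩ := i
  show T.xst e * T.mixElem ⟨vA, lA⟩ g ⟨vB, lB⟩ ∈ _
  cases lA with
  | nil =>
    rw [mixElem, T.pathElem_nil, rng_mk_nil, T.xv_mul_xvg, if_pos rfl, ← mul_assoc,
      T.xst_mul_xvg, ite_mul, zero_mul]
    split_ifs with hva
    · rw [smul_mul_assoc, T.xgst_eq', mul_assoc]
      have hsnoc : (DirGraph.Path.mk vB lB).rng = Γ.s (T.actE g⁻¹ e) := by
        rw [T.s_act]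
        apply (T.actV_injective g)
        rw [T.actV_act_inv, h3, rng_mk_nil, hva]
      rw [← T.star_snoc (T.actE g⁻¹ e) lB vB hsnoc]
      apply Submodule.smul_mem
      have hmix : T.mixElem (DirGraph.Path.mk
            (T.actV (T.φ g (T.actE g⁻¹ e)) (Γ.r (T.actE g⁻¹ e))) [])
          (T.φ g (T.actE g⁻¹ e)) (DirGraph.Path.mk vB (lB ++ [T.actE g⁻¹ e])) =
          T.xvg (T.actV (T.φ g (T.actE g⁻¹ e)) (Γ.r (T.actE g⁻¹ e)))
            (T.φ g (T.actE g⁻¹ e)) *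
            T.starElem (DirGraph.Path.mk vB (lB ++ [T.actE g⁻¹ e])) := by
        rw [mixElem, T.pathElem_nil, rng_mk_nil, T.xv_mul_xvg, if_pos rfl]
      rw [← hmix]
      apply T.mix_mem
      · exact ofVertex_isGood Γ _
      · exact DirGraph.isGood_comp h2 (ofEdge_isGood Γ _) hsnoc
      · rw [show (DirGraph.Path.mk vB (lB ++ [T.actE g⁻¹ e])).rng = Γ.r (T.actE g⁻¹ e) from
          DirGraph.rng_eq_getLast (by rw [List.getLast?_concat]; rfl), rng_mk_nil]
    · exact zero_mem _
  | cons f lA' =>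
    have hsf : Γ.s f = vA := h1.1 f rfl
    obtain ⟨hh2, hc2⟩ := List.isChain_cons.mp h1.2
    have hgood' : (DirGraph.Path.mk (Γ.r f) lA').IsGood :=
      ⟨fun x hx => (hh2 x hx).symm, hc2⟩
    rw [mixElem, T.pathElem_cons f lA' vA hsf, ← mul_assoc, ← mul_assoc, ← mul_assoc,
      T.xst_mul_xe]
    split_ifs with hef
    · subst hef
      rw [T.xv_mul_path _ _ hgood', src_mk, if_pos rfl, DirGraph.rng_cons]
      exact T.mix_mem _ g _ hgood' h2 (by rw [← DirGraph.rng_cons vA e lA']; exact h3)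
    · rw [zero_mul, zero_mul, zero_mul]
      exact zero_mem _

end TwistedEP
namespace TwistedEP

open DirGraph

variable {ℓ : Type} [CommRing ℓ] {Γ : DirGraph} {G : Type} [Group G] (T : TwistedEP ℓ Γ G)

theorem xv_mem (v : Γ.V) : T.xv v ∈ Submodule.span ℓ (Set.range T.BFam) := by
  have hmix : T.mixElem (DirGraph.Path.mk v []) 1 (DirGraph.Path.mk v []) = T.xv v := by
    rw [mixElem, T.pathElem_nil, T.starElem_nil, rng_mk_nil, T.xv_mul_xvg, if_pos rfl,
      T.xvg_mul_xv, if_pos (T.actV_one v).symm, ← T.xv_eq]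
  exact hmix ▸ T.mix_mem _ _ _ (ofVertex_isGood Γ v) (ofVertex_isGood Γ v)
    (by simp only [rng_mk_nil, T.actV_one])

theorem xvg_mem (v : Γ.V) (g : G) : T.xvg v g ∈ Submodule.span ℓ (Set.range T.BFam) := by
  have hmix : T.mixElem (DirGraph.Path.mk v []) g (DirGraph.Path.mk (T.actV g⁻¹ v) []) =
      T.xvg v g := by
    rw [mixElem, T.pathElem_nil, T.starElem_nil, rng_mk_nil, T.xv_mul_xvg, if_pos rfl,
      T.xvg_mul_xv, if_pos (by rw [T.actV_act_inv])]
  exact hmix ▸ T.mix_mem _ _ _ (ofVertex_isGood Γ v) (ofVertex_isGood Γ _)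
    (by simp only [rng_mk_nil, T.actV_act_inv])

theorem xe_mem (e : Γ.E) : T.xe e ∈ Submodule.span ℓ (Set.range T.BFam) := by
  have hrng : (DirGraph.Path.mk (Γ.s e) [e]).rng = Γ.r e := by
    rw [DirGraph.rng_cons, rng_mk_nil]
  have hmix : T.mixElem (DirGraph.Path.mk (Γ.s e) [e]) 1 (DirGraph.Path.mk (Γ.r e) []) =
      T.xe e := by
    rw [mixElem, T.pathElem_cons e [] (Γ.s e) rfl, T.pathElem_nil, T.xe_mul_xv, hrng,
      T.starElem_nil, T.xe_mul_xvg, ← T.xe_eq, T.xe_mul_xv]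
  exact hmix ▸ T.mix_mem _ _ _ (ofEdge_isGood Γ e) (ofVertex_isGood Γ _)
    (by simp only [rng_mk_nil, hrng, T.actV_one])

theorem xeg_mem (e : Γ.E) (g : G) : T.xeg e g ∈ Submodule.span ℓ (Set.range T.BFam) := by
  have hrng : (DirGraph.Path.mk (Γ.s e) [e]).rng = Γ.r e := by
    rw [DirGraph.rng_cons, rng_mk_nil]
  have hmix : T.mixElem (DirGraph.Path.mk (Γ.s e) [e]) g
      (DirGraph.Path.mk (T.actV g⁻¹ (Γ.r e)) []) = T.xeg e g := by
    rw [mixElem, T.pathElem_cons e [] (Γ.s e) rfl, T.pathElem_nil, T.xe_mul_xv, hrng,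
      T.starElem_nil, T.xe_mul_xvg]
    conv_lhs => rw [T.xeg_eq, mul_assoc, T.xvg_mul_xv,
      if_pos (show Γ.r e = T.actV g (T.actV g⁻¹ (Γ.r e)) by rw [T.actV_act_inv])]
    exact (T.xeg_eq e g).symm
  exact hmix ▸ T.mix_mem _ _ _ (ofEdge_isGood Γ e) (ofVertex_isGood Γ _)
    (by simp only [rng_mk_nil, hrng, T.actV_act_inv])

theorem xst_mem (e : Γ.E) : T.xst e ∈ Submodule.span ℓ (Set.range T.BFam) := by
  have hrng : (DirGraph.Path.mk (Γ.s e) [e]).rng = Γ.r e := by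
    rw [DirGraph.rng_cons, rng_mk_nil]
  have hmix : T.mixElem (DirGraph.Path.mk (Γ.r e) []) 1 (DirGraph.Path.mk (Γ.s e) [e]) =
      T.xst e := by
    rw [mixElem, T.pathElem_nil, rng_mk_nil, T.starElem_cons, T.starElem_nil,
      T.xv_mul_xst, T.xv_mul_xvg, if_pos rfl, ← T.xv_eq, T.xv_mul_xst]
  exact hmix ▸ T.mix_mem _ _ _ (ofVertex_isGood Γ _) (ofEdge_isGood Γ e)
    (by simp only [rng_mk_nil, hrng, T.actV_one])

theorem xgst_mem (g : G) (e : Γ.E) :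
    T.xgst g e ∈ Submodule.span ℓ (Set.range T.BFam) := by
  have hrng : (DirGraph.Path.mk (Γ.s e) [e]).rng = Γ.r e := by
    rw [DirGraph.rng_cons, rng_mk_nil]
  have hmix : T.mixElem (DirGraph.Path.mk (T.actV g (Γ.r e)) []) g
      (DirGraph.Path.mk (Γ.s e) [e]) = T.xgst g e := by
    rw [mixElem, T.pathElem_nil, rng_mk_nil, T.starElem_cons, T.starElem_nil,
      T.xv_mul_xst, T.xv_mul_xvg, if_pos rfl, ← T.xgst_eq']
  exact hmix ▸ T.mix_mem _ _ _ (ofVertex_isGood Γ _) (ofEdge_isGood Γ e)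
    (by simp only [rng_mk_nil, hrng])

theorem gen_mem (x : CohnGen Γ G) :
    T.mkC (ι x) ∈ Submodule.span ℓ (Set.range T.BFam) := by
  cases x with
  | v w => exact T.xv_mem w
  | vg w h => exact T.xvg_mem w h
  | e e => exact T.xe_mem e
  | eg e h => exact T.xeg_mem e h
  | st e => exact T.xst_mem e
  | gst h e => exact T.xgst_mem h e

theorem mul_mem_span (x : CQ T)
    (hx : ∀ i : T.BIdx, x * T.BFam i ∈ Submodule.span ℓ (Set.range T.BFam))
    {y : CQ T} (hy : y ∈ Submodule.span ℓ (Set.range T.BFam)) :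
    x * y ∈ Submodule.span ℓ (Set.range T.BFam) := by
  induction hy using Submodule.span_induction with
  | mem z hz => obtain ⟨i, rfl⟩ := hz; exact hx i
  | zero => rw [mul_zero]; exact zero_mem _
  | add a b _ _ ha hb => rw [mul_add]; exact add_mem ha hb
  | smul r a _ ha => rw [mul_smul_comm]; exact Submodule.smul_mem _ _ ha

theorem gen_mul_span (x : CohnGen Γ G) {y : CQ T}
    (hy : y ∈ Submodule.span ℓ (Set.range T.BFam)) :
    T.mkC (ι x) * y ∈ Submodule.span ℓ (Set.range T.BFam) := by
  cases x with
  | v w => exact T.mul_mem_span _ (fun i => T.xv_mul_BFam w i) hy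
  | vg w h => exact T.mul_mem_span _ (fun i => T.xvg_mul_BFam w h i) hy
  | e e => exact T.mul_mem_span _ (fun i => T.xe_mul_BFam e i) hy
  | st e => exact T.mul_mem_span _ (fun i => T.xst_mul_BFam e i) hy
  | eg e h =>
    rw [show T.mkC (ι (CohnGen.eg e h)) = T.xe e * T.xvg (Γ.r e) h from
      (T.xe_mul_xvg e h).symm, mul_assoc]
    exact T.mul_mem_span _ (fun i => T.xe_mul_BFam e i)
      (T.mul_mem_span _ (fun i => T.xvg_mul_BFam (Γ.r e) h i) hy)
  | gst h e =>
    rw [show T.mkC (ι (CohnGen.gst h e)) =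
        T.xvg (T.actV h (Γ.r e)) h * T.xst e from T.xgst_eq' h e, mul_assoc]
    exact T.mul_mem_span _ (fun i => T.xvg_mul_BFam (T.actV h (Γ.r e)) h i)
      (T.mul_mem_span _ (fun i => T.xst_mul_BFam e i) hy)

theorem span_eq_cohnPart :
    Submodule.span ℓ (Set.range T.BFam) = T.cohnPart := by
  apply le_antisymm
  · rw [Submodule.span_le]
    rintro x ⟨i, rfl⟩
    obtain ⟨⟨α, g, β⟩, -, -, -⟩ := i
    show T.mixElem α g β ∈ NonUnitalAlgebra.adjoin ℓ T.genSet
    have hP : ∀ (l : List Γ.E) (x : CQ T), x ∈ NonUnitalAlgebra.adjoin ℓ T.genSet →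
        l.foldl (fun a e => a * T.xe e) x ∈ NonUnitalAlgebra.adjoin ℓ T.genSet := by
      intro l
      induction l with
      | nil => exact fun x hx => hx
      | cons e l ih =>
        intro x hx
        exact ih _ (mul_mem hx (NonUnitalAlgebra.subset_adjoin ℓ ⟨CohnGen.e e, rfl⟩))
    have hS : ∀ (l : List Γ.E) (x : CQ T), x ∈ NonUnitalAlgebra.adjoin ℓ T.genSet →
        l.foldr (fun e a => a * T.xst e) x ∈ NonUnitalAlgebra.adjoin ℓ T.genSet := by
      intro l
      induction l with
      | nil => exact fun x hx => hx
      | cons e l ih =>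
        intro x hx
        exact mul_mem (ih _ hx) (NonUnitalAlgebra.subset_adjoin ℓ ⟨CohnGen.st e, rfl⟩)
    refine mul_mem (mul_mem ?_ ?_) ?_
    · exact hP _ _ (NonUnitalAlgebra.subset_adjoin ℓ ⟨CohnGen.v α.src, rfl⟩)
    · exact NonUnitalAlgebra.subset_adjoin ℓ ⟨CohnGen.vg α.rng g, rfl⟩
    · exact hS _ _ (NonUnitalAlgebra.subset_adjoin ℓ ⟨CohnGen.v β.rng, rfl⟩)
  · rw [cohnPart, NonUnitalAlgebra.adjoin_eq_span, Submodule.span_le]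
    intro x hx
    have key : ∀ x, x ∈ Subsemigroup.closure T.genSet →
        x ∈ Submodule.span ℓ (Set.range T.BFam) ∧
          ∀ y ∈ Submodule.span ℓ (Set.range T.BFam),
            x * y ∈ Submodule.span ℓ (Set.range T.BFam) := by
      intro x hx
      induction hx using Subsemigroup.closure_induction with
      | mem z hz =>
        obtain ⟨gg, rfl⟩ := hz
        exact ⟨T.gen_mem gg, fun y hy => T.gen_mul_span gg hy⟩
      | mul a b ha hb iha ihb =>
        exact ⟨iha.2 b ihb.1, fun y hy => by
          rw [mul_assoc]; exact iha.2 _ (ihb.2 y hy)⟩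
    exact (key x hx).1

end TwistedEP

open DirGraph in
/-- **Statement 3** (Corollary `coro:cohnpres`).  The Cohn algebra
`C(G,E,φ_c)` of a twisted Exel–Pardo tuple is a free `ℓ`-module with basis
`ℬ = {α g β* : α, β ∈ 𝒫(E), g ∈ G, g(r(β)) = r(α)}`. -/
theorem cohn_algebra_free_with_basis
    (ℓ : Type) [CommRing ℓ] (Γ : DirGraph) (G : Type) [Group G]
    (T : TwistedEP ℓ Γ G) :
    LinearIndependent ℓ T.BFam ∧
      Submodule.span ℓ (Set.range T.BFam) = T.cohnPart := by
  exact ⟨T.linearIndependent_BFam, T.span_eq_cohnPart⟩
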